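/- Let (T, q) be a classical solution of the Guyer–Krumhansl system on (0,l) with boundary conditions q(0,t) = q(l,t) = 0. Then the functional energy E is non-increasing: for all 0 ≤ s ≤ t one has E(t) ≤ E(s). -/

import Mathlib

open Set MeasureTheory intervalIntegral

/-- A classical solution of the one-dimensional Guyer–Krumhansl system on `(0, l)`:
`T` is the temperature, `q` the heat flux, and `Tt, Tx, qt, qx, qxx` are the
corresponding partial derivatives (continuous on `[0,l] × [0,∞)`), satisfying
`ρ c T_t + q_x = 0` and `τ_q q_t + q − μ² q_xx + k T_x = 0` on `(0,l) × (0,∞)`,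
with adiabatic boundary conditions `q(0,t) = q(l,t) = 0` for all `t ≥ 0`. -/
structure IsGKSolution (l ρ c τq μ2 k : ℝ)
    (T q Tt Tx qt qx qxx : ℝ → ℝ → ℝ) : Prop where
  contT : ContinuousOn (fun p : ℝ × ℝ => T p.1 p.2) (Icc (0:ℝ) l ×ˢ Ici (0:ℝ))
  contq : ContinuousOn (fun p : ℝ × ℝ => q p.1 p.2) (Icc (0:ℝ) l ×ˢ Ici (0:ℝ))
  hTt : ∀ x ∈ Icc (0:ℝ) l, ∀ t ∈ Ici (0:ℝ),
    HasDerivWithinAt (fun s => T x s) (Tt x t) (Ici (0:ℝ)) t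
  hTx : ∀ x ∈ Icc (0:ℝ) l, ∀ t ∈ Ici (0:ℝ),
    HasDerivWithinAt (fun y => T y t) (Tx x t) (Icc (0:ℝ) l) x
  hqt : ∀ x ∈ Icc (0:ℝ) l, ∀ t ∈ Ici (0:ℝ),
    HasDerivWithinAt (fun s => q x s) (qt x t) (Ici (0:ℝ)) t
  hqx : ∀ x ∈ Icc (0:ℝ) l, ∀ t ∈ Ici (0:ℝ),
    HasDerivWithinAt (fun y => q y t) (qx x t) (Icc (0:ℝ) l) x
  hqxx : ∀ x ∈ Icc (0:ℝ) l, ∀ t ∈ Ici (0:ℝ),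
    HasDerivWithinAt (fun y => qx y t) (qxx x t) (Icc (0:ℝ) l) x
  contTt : ContinuousOn (fun p : ℝ × ℝ => Tt p.1 p.2) (Icc (0:ℝ) l ×ˢ Ici (0:ℝ))
  contTx : ContinuousOn (fun p : ℝ × ℝ => Tx p.1 p.2) (Icc (0:ℝ) l ×ˢ Ici (0:ℝ))
  contqt : ContinuousOn (fun p : ℝ × ℝ => qt p.1 p.2) (Icc (0:ℝ) l ×ˢ Ici (0:ℝ))
  contqx : ContinuousOn (fun p : ℝ × ℝ => qx p.1 p.2) (Icc (0:ℝ) l ×ˢ Ici (0:ℝ))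
  contqxx : ContinuousOn (fun p : ℝ × ℝ => qxx p.1 p.2) (Icc (0:ℝ) l ×ˢ Ici (0:ℝ))
  pde1 : ∀ x ∈ Ioo (0:ℝ) l, ∀ t ∈ Ioi (0:ℝ), ρ * c * Tt x t + qx x t = 0
  pde2 : ∀ x ∈ Ioo (0:ℝ) l, ∀ t ∈ Ioi (0:ℝ),
    τq * qt x t + q x t - μ2 * qxx x t + k * Tx x t = 0
  bc0 : ∀ t : ℝ, 0 ≤ t → q 0 t = 0
  bcl : ∀ t : ℝ, 0 ≤ t → q l t = 0

/-- The functional energy `E(t) = (ρc/2)∫₀ˡ T² dx + (τ_q/(2k))∫₀ˡ q² dx`. -/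
noncomputable def gkEnergy (l ρ c τq k : ℝ) (T q : ℝ → ℝ → ℝ) (t : ℝ) : ℝ :=
  ρ * c / 2 * (∫ x in (0:ℝ)..l, (T x t) ^ 2)
    + τq / (2 * k) * (∫ x in (0:ℝ)..l, (q x t) ^ 2)

/-- FTC for the square of a function with a one-sided derivative on `[s,t] ⊆ [0,∞)`. -/
private lemma gk_ftc_sq {f f' : ℝ → ℝ} {s t : ℝ} (hs : 0 ≤ s) (hst : s ≤ t)
    (hd : ∀ τ ∈ Icc s t, HasDerivWithinAt f (f' τ) (Ici (0:ℝ)) τ)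
    (hc' : ContinuousOn f' (Icc s t)) :
    ∫ τ in s..t, 2 * (f τ * f' τ) = f t ^ 2 - f s ^ 2 := by
  have hsub : Icc s t ⊆ Ici (0:ℝ) := fun y hy => hs.trans hy.1
  have hcf : ContinuousOn f (Icc s t) :=
    fun τ hτ => ((hd τ hτ).continuousWithinAt).mono hsub
  apply intervalIntegral.integral_eq_sub_of_hasDeriv_right_of_le hst (hcf.pow 2)
  · intro τ hτ
    have h0 : Ioi τ ⊆ Ici (0:ℝ) := fun y hy => ((hs.trans hτ.1.le).trans hy.le)
    have h := ((hd τ ⟨hτ.1.le, hτ.2.le⟩).mono h0).pow 2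
    convert h using 1
    · rfl
    push_cast
    ring
  · apply ContinuousOn.intervalIntegrable
    rw [uIcc_of_le hst]
    exact continuous_const.continuousOn.mul (hcf.mul hc')

/-- FTC in space on `[0,l]` with one-sided derivatives. -/
private lemma gk_ftc_x {l : ℝ} (hl : 0 ≤ l) {f f' : ℝ → ℝ}
    (hd : ∀ x ∈ Icc (0:ℝ) l, HasDerivWithinAt f (f' x) (Icc (0:ℝ) l) x)
    (hc' : ContinuousOn f' (Icc (0:ℝ) l)) :
    ∫ x in (0:ℝ)..l, f' x = f l - f 0 := by
  apply intervalIntegral.integral_eq_sub_of_hasDeriv_right_of_le hl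
    (fun x hx => (hd x hx).continuousWithinAt)
  · intro x hx
    exact (hd x (Ioo_subset_Icc_self hx)).mono_of_mem_nhdsWithin
      (Icc_mem_nhdsGT_of_mem ⟨hx.1.le, hx.2⟩)
  · apply ContinuousOn.intervalIntegrable
    rw [uIcc_of_le hl]
    exact hc'

/-- for a classical solution of the Guyer–Krumhansl system, the
functional energy is non-increasing: `E(t) ≤ E(s)` for all `0 ≤ s ≤ t`. -/
theorem gk_energy_nonincreasing
    (l ρ c τq μ2 k : ℝ) (hl : 0 < l) (hρ : 0 < ρ) (hc : 0 < c)
    (hτq : 0 < τq) (hμ2 : 0 < μ2) (hk : 0 < k)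
    (T q Tt Tx qt qx qxx : ℝ → ℝ → ℝ)
    (hgk : IsGKSolution l ρ c τq μ2 k T q Tt Tx qt qx qxx) :
    ∀ s t : ℝ, 0 ≤ s → s ≤ t →
      gkEnergy l ρ c τq k T q t ≤ gkEnergy l ρ c τq k T q s := by
  intro s t hs hst
  -- slices of jointly continuous functions
  have slice : ∀ {f : ℝ → ℝ → ℝ},
      ContinuousOn (fun p : ℝ × ℝ => f p.1 p.2) (Icc (0:ℝ) l ×ˢ Ici (0:ℝ)) →
      ∀ {τ : ℝ}, 0 ≤ τ → ContinuousOn (fun x => f x τ) (Icc (0:ℝ) l) := by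
    intro f hf τ hτ
    exact hf.comp (continuous_id.prodMk continuous_const).continuousOn
      (fun x hx => ⟨hx, hτ⟩)
  have slicet : ∀ {f : ℝ → ℝ → ℝ},
      ContinuousOn (fun p : ℝ × ℝ => f p.1 p.2) (Icc (0:ℝ) l ×ˢ Ici (0:ℝ)) →
      ∀ {x : ℝ}, x ∈ Icc (0:ℝ) l → ContinuousOn (fun τ => f x τ) (Ici (0:ℝ)) := by
    intro f hf x hx
    exact hf.comp (continuous_const.prodMk continuous_id).continuousOn
      (fun τ hτ => ⟨hx, hτ⟩)
  have hJsub : Icc s t ⊆ Ici (0:ℝ) := fun y hy => hs.trans hy.1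
  -- the two integrands after differentiating in time
  set gT : ℝ → ℝ → ℝ := fun x τ => ρ * c * (T x τ * Tt x τ) with hgT
  set gq : ℝ → ℝ → ℝ := fun x τ => τq / k * (q x τ * qt x τ) with hgq
  -- time FTC at each x
  have hT_time : ∀ x ∈ Icc (0:ℝ) l,
      (∫ τ in s..t, gT x τ) = ρ * c / 2 * (T x t ^ 2 - T x s ^ 2) := by
    intro x hx
    have h := gk_ftc_sq hs hst (fun τ hτ => hgk.hTt x hx τ (hJsub hτ))
      ((slicet hgk.contTt hx).mono hJsub)
    rw [← h, ← intervalIntegral.integral_const_mul]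
    apply intervalIntegral.integral_congr
    intro τ _
    show gT x τ = ρ * c / 2 * (2 * (T x τ * Tt x τ))
    rw [hgT]; ring
  have hq_time : ∀ x ∈ Icc (0:ℝ) l,
      (∫ τ in s..t, gq x τ) = τq / (2 * k) * (q x t ^ 2 - q x s ^ 2) := by
    intro x hx
    have h := gk_ftc_sq hs hst (fun τ hτ => hgk.hqt x hx τ (hJsub hτ))
      ((slicet hgk.contqt hx).mono hJsub)
    rw [← h, ← intervalIntegral.integral_const_mul]
    apply intervalIntegral.integral_congr
    intro τ _
    show gq x τ = τq / (2 * k) * (2 * (q x τ * qt x τ))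
    rw [hgq]
    field_simp
  -- interval integrability of squares in x
  have cT2 : ∀ u : ℝ, 0 ≤ u → IntervalIntegrable (fun x => T x u ^ 2) volume 0 l := by
    intro u hu
    apply ContinuousOn.intervalIntegrable
    rw [uIcc_of_le hl.le]
    exact (slice hgk.contT hu).pow 2
  have cq2 : ∀ u : ℝ, 0 ≤ u → IntervalIntegrable (fun x => q x u ^ 2) volume 0 l := by
    intro u hu
    apply ContinuousOn.intervalIntegrable
    rw [uIcc_of_le hl.le]
    exact (slice hgk.contq hu).pow 2
  have eT : ρ * c / 2 * (∫ x in (0:ℝ)..l, T x t ^ 2)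
      - ρ * c / 2 * (∫ x in (0:ℝ)..l, T x s ^ 2)
      = ∫ x in (0:ℝ)..l, ∫ τ in s..t, gT x τ := by
    rw [← mul_sub, ← intervalIntegral.integral_sub (cT2 t (hs.trans hst)) (cT2 s hs),
      ← intervalIntegral.integral_const_mul]
    apply intervalIntegral.integral_congr
    intro x hx
    rw [uIcc_of_le hl.le] at hx
    exact (hT_time x hx).symm
  have eQ : τq / (2 * k) * (∫ x in (0:ℝ)..l, q x t ^ 2)
      - τq / (2 * k) * (∫ x in (0:ℝ)..l, q x s ^ 2)
      = ∫ x in (0:ℝ)..l, ∫ τ in s..t, gq x τ := by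
    rw [← mul_sub, ← intervalIntegral.integral_sub (cq2 t (hs.trans hst)) (cq2 s hs),
      ← intervalIntegral.integral_const_mul]
    apply intervalIntegral.integral_congr
    intro x hx
    rw [uIcc_of_le hl.le] at hx
    exact (hq_time x hx).symm
  have e1 : gkEnergy l ρ c τq k T q t - gkEnergy l ρ c τq k T q s
      = (∫ x in (0:ℝ)..l, ∫ τ in s..t, gT x τ)
        + (∫ x in (0:ℝ)..l, ∫ τ in s..t, gq x τ) := by
    rw [gkEnergy, gkEnergy]
    linarith [eT, eQ]
  -- Fubini
  have hK : Icc (0:ℝ) l ×ˢ Icc s t ⊆ Icc (0:ℝ) l ×ˢ Ici (0:ℝ) :=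
    prod_mono subset_rfl hJsub
  have hint : ∀ {g : ℝ → ℝ → ℝ},
      ContinuousOn (fun p : ℝ × ℝ => g p.1 p.2) (Icc (0:ℝ) l ×ˢ Icc s t) →
      Integrable (Function.uncurry g)
        ((volume.restrict (Ioc (0:ℝ) l)).prod (volume.restrict (Ioc s t))) := by
    intro g hg
    rw [Measure.prod_restrict]
    have h1 : IntegrableOn (Function.uncurry g) (Icc (0:ℝ) l ×ˢ Icc s t) volume :=
      hg.integrableOn_compact (isCompact_Icc.prod isCompact_Icc)
    have h2 := h1.mono_set (prod_mono Ioc_subset_Icc_self Ioc_subset_Icc_self)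
    rwa [← Measure.volume_eq_prod]
  have hgTc : ContinuousOn (fun p : ℝ × ℝ => gT p.1 p.2) (Icc (0:ℝ) l ×ˢ Icc s t) :=
    continuousOn_const.mul ((hgk.contT.mono hK).mul (hgk.contTt.mono hK))
  have hgqc : ContinuousOn (fun p : ℝ × ℝ => gq p.1 p.2) (Icc (0:ℝ) l ×ˢ Icc s t) :=
    continuousOn_const.mul ((hgk.contq.mono hK).mul (hgk.contqt.mono hK))
  have swapT := MeasureTheory.integral_integral_swap (hint hgTc)
  have swapQ := MeasureTheory.integral_integral_swap (hint hgqc)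
  have hAT := (hint hgTc).integral_prod_right
  have hAQ := (hint hgqc).integral_prod_right
  have e2 : gkEnergy l ρ c τq k T q t - gkEnergy l ρ c τq k T q s
      = ∫ τ in Ioc s t, ((∫ x in Ioc (0:ℝ) l, gT x τ) + (∫ x in Ioc (0:ℝ) l, gq x τ)) := by
    rw [e1]
    simp only [intervalIntegral.integral_of_le hl.le, intervalIntegral.integral_of_le hst]
    rw [swapT, swapQ]
    exact (integral_add hAT hAQ).symm
  -- key spatial estimate
  have key : ∀ τ : ℝ, 0 < τ →
      (∫ x in Ioc (0:ℝ) l, gT x τ) + (∫ x in Ioc (0:ℝ) l, gq x τ) ≤ 0 := by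
    intro τ hτ
    have hτ0 : (0:ℝ) ≤ τ := hτ.le
    have cTτ := slice hgk.contT hτ0
    have cTtτ := slice hgk.contTt hτ0
    have cTxτ := slice hgk.contTx hτ0
    have cqτ := slice hgk.contq hτ0
    have cqtτ := slice hgk.contqt hτ0
    have cqxτ := slice hgk.contqx hτ0
    have cqxxτ := slice hgk.contqxx hτ0
    have igT : IntervalIntegrable (fun x => gT x τ) volume 0 l := by
      apply ContinuousOn.intervalIntegrable
      rw [uIcc_of_le hl.le]
      exact continuousOn_const.mul (cTτ.mul cTtτ)
    have igq : IntervalIntegrable (fun x => gq x τ) volume 0 l := by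
      apply ContinuousOn.intervalIntegrable
      rw [uIcc_of_le hl.le]
      exact continuousOn_const.mul (cqτ.mul cqtτ)
    rw [← intervalIntegral.integral_of_le hl.le, ← intervalIntegral.integral_of_le hl.le,
      ← intervalIntegral.integral_add igT igq]
    -- the boundary function and its derivative
    have hφ : ∀ x ∈ Icc (0:ℝ) l,
        HasDerivWithinAt (fun y => -(T y τ * q y τ) + μ2 / k * (q y τ * qx y τ))
          (-(Tx x τ * q x τ + T x τ * qx x τ)
            + μ2 / k * (qx x τ * qx x τ + q x τ * qxx x τ)) (Icc (0:ℝ) l) x := by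
      intro x hx
      exact (((hgk.hTx x hx τ hτ0).mul (hgk.hqx x hx τ hτ0)).neg).add
        (((hgk.hqx x hx τ hτ0).mul (hgk.hqxx x hx τ hτ0)).const_mul (μ2 / k))
    have cD : ContinuousOn (fun x => -(Tx x τ * q x τ + T x τ * qx x τ)
        + μ2 / k * (qx x τ * qx x τ + q x τ * qxx x τ)) (Icc (0:ℝ) l) :=
      ((cTxτ.mul cqτ).add (cTτ.mul cqxτ)).neg.add
        (continuousOn_const.mul ((cqxτ.mul cqxτ).add (cqτ.mul cqxxτ)))
    have hftc : (∫ x in (0:ℝ)..l, (-(Tx x τ * q x τ + T x τ * qx x τ)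
          + μ2 / k * (qx x τ * qx x τ + q x τ * qxx x τ)))
        = (-(T l τ * q l τ) + μ2 / k * (q l τ * qx l τ))
          - (-(T 0 τ * q 0 τ) + μ2 / k * (q 0 τ * qx 0 τ)) :=
      gk_ftc_x hl.le hφ cD
    have hbl : q l τ = 0 := hgk.bcl τ hτ0
    have hb0 : q 0 τ = 0 := hgk.bc0 τ hτ0
    rw [hbl, hb0] at hftc
    simp only [mul_zero, zero_mul, neg_zero, zero_add, sub_zero, add_zero] at hftc
    -- rewrite the integrand a.e. on (0,l)
    have hcongr : (∫ x in (0:ℝ)..l, (gT x τ + gq x τ))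
        = ∫ x in (0:ℝ)..l, ((-(Tx x τ * q x τ + T x τ * qx x τ)
            + μ2 / k * (qx x τ * qx x τ + q x τ * qxx x τ))
          - μ2 / k * qx x τ ^ 2 - 1 / k * q x τ ^ 2) := by
      rw [intervalIntegral.integral_of_le hl.le, intervalIntegral.integral_of_le hl.le,
        ← setIntegral_congr_set Ioo_ae_eq_Ioc, ← setIntegral_congr_set Ioo_ae_eq_Ioc]
      apply setIntegral_congr_fun measurableSet_Ioo
      intro x hx
      have h1 := hgk.pde1 x hx τ hτ
      have h2 := hgk.pde2 x hx τ hτ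
      show gT x τ + gq x τ = _
      rw [hgT, hgq]
      field_simp
      linear_combination (k * T x τ) * h1 + q x τ * h2
    rw [hcongr, intervalIntegral.integral_sub, intervalIntegral.integral_sub, hftc]
    · have h1 : 0 ≤ ∫ x in (0:ℝ)..l, μ2 / k * qx x τ ^ 2 :=
        intervalIntegral.integral_nonneg hl.le (fun u _ => by positivity)
      have h2 : 0 ≤ ∫ x in (0:ℝ)..l, 1 / k * q x τ ^ 2 :=
        intervalIntegral.integral_nonneg hl.le (fun u _ => by positivity)
      linarith
    · apply ContinuousOn.intervalIntegrable
      rw [uIcc_of_le hl.le]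
      exact cD
    · apply ContinuousOn.intervalIntegrable
      rw [uIcc_of_le hl.le]
      exact continuousOn_const.mul (cqxτ.pow 2)
    · apply ContinuousOn.intervalIntegrable
      rw [uIcc_of_le hl.le]
      exact cD.sub (continuousOn_const.mul (cqxτ.pow 2))
    · apply ContinuousOn.intervalIntegrable
      rw [uIcc_of_le hl.le]
      exact continuousOn_const.mul (cqτ.pow 2)
  have hneg : (∫ τ in Ioc s t,
      ((∫ x in Ioc (0:ℝ) l, gT x τ) + (∫ x in Ioc (0:ℝ) l, gq x τ))) ≤ 0 :=
    setIntegral_nonpos_ae measurableSet_Ioc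
      (Filter.Eventually.of_forall (fun τ hτ => key τ (lt_of_le_of_lt hs hτ.1)))
  linarith [e2, hneg]
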